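/- (Accelerated rates) In the setting of the accelerated proximal gradient scheme with b_k = (k+1)/4, B_k = (k+1)(k+2)/8, a_k = (k+1)²/(32L), the condition a_k ≤ (B_k − b_k²)/(2L) holds for all k ≥ 1, and with C̃ := a_0‖G(x^0)‖² + b_0(φ(y^0) − φ̄) + (L/2)‖x* − v^0‖², one has φ(y^k) − φ̄ ≤ 8C̃/((k+1)(k+2)) and min_{0≤i≤k} ‖G(x^i)‖² ≤ 192L·C̃/((k+1)(k+2)(2k+3)) for all k ≥ 1. -/

import Mathlib

open scoped RealInnerProductSpace

/-- The proximal gradient mapping with step `1/L`: `G(z) = L(z - prox(z - (1/L)∇f z))`. -/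
noncomputable def pgmL {E : Type*} [NormedAddCommGroup E] [InnerProductSpace ℝ E]
    (f' : E → E) (prox : E → E) (L : ℝ) (z : E) : E :=
  L • (z - prox (z - (1 / L) • f' z))

section Aux

variable {E : Type*} [NormedAddCommGroup E] [InnerProductSpace ℝ E] [CompleteSpace E]

lemma convex_grad_le {f : E → ℝ} {f' : E → E} (hconv : ConvexOn ℝ Set.univ f)
    (hdiff : ∀ x, HasGradientAt f (f' x) x) (z u : E) :
    f z + ⟪f' z, u - z⟫ ≤ f u := by
  set d := u - z with hd
  have line : HasDerivAt (fun t : ℝ => z + t • d) d 0 := by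
    simpa using ((hasDerivAt_id (0:ℝ)).smul_const d).const_add z
  have hfd : HasDerivAt (fun t : ℝ => f (z + t • d)) ⟪f' z, d⟫ 0 := by
    have h0 : z + (0:ℝ) • d = z := by simp
    have := (hdiff (z + (0:ℝ) • d)).hasFDerivAt.comp_hasDerivAt 0 line
    simpa [h0, InnerProductSpace.toDual_apply_apply, Function.comp_def] using this
  have hslope := hasDerivAt_iff_tendsto_slope.mp hfd
  have hslope' : Filter.Tendsto (slope (fun t : ℝ => f (z + t • d)) 0) (nhdsWithin 0 (Set.Ioi 0))
      (nhds ⟪f' z, d⟫) :=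
    hslope.mono_left (nhdsWithin_mono 0 (fun t ht => ne_of_gt ht))
  have hev : ∀ᶠ t in nhdsWithin (0:ℝ) (Set.Ioi 0),
      slope (fun t : ℝ => f (z + t • d)) 0 t ≤ f u - f z := by
    filter_upwards [Ioc_mem_nhdsGT one_pos] with t ht
    have ht0 : (0:ℝ) < t := ht.1
    have ht1 : t ≤ 1 := ht.2
    have hcvx := hconv.2 (Set.mem_univ z) (Set.mem_univ u) (by linarith : (0:ℝ) ≤ 1 - t)
      ht0.le (by ring)
    have hco : (1 - t) • z + t • u = z + t • d := by rw [hd]; module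
    rw [hco] at hcvx
    rw [slope_def_field]
    simp only [sub_zero, smul_zero, add_zero] -- ?
    rw [div_le_iff₀ ht0]
    simp only [zero_smul, add_zero, smul_eq_mul] at hcvx ⊢
    nlinarith [hcvx]
  have := le_of_tendsto hslope' hev
  linarith

lemma descent_lemma {f : E → ℝ} {f' : E → E} {L : ℝ}
    (hdiff : ∀ x, HasGradientAt f (f' x) x)
    (hlip : ∀ x y, ‖f' x - f' y‖ ≤ L * ‖x - y‖) (p q : E) :
    f q ≤ f p + ⟪f' p, q - p⟫ + L / 2 * ‖q - p‖ ^ 2 := by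
  set d := q - p with hd
  set h : ℝ → ℝ := fun t => f (p + t • d) - t * ⟪f' p, d⟫ - t ^ 2 * (L / 2 * ‖d‖ ^ 2)
    with hh_def
  have hfd : ∀ t : ℝ, HasDerivAt (fun s : ℝ => f (p + s • d)) ⟪f' (p + t • d), d⟫ t := by
    intro t
    have line : HasDerivAt (fun s : ℝ => p + s • d) d t := by
      simpa using ((hasDerivAt_id t).smul_const d).const_add p
    have := (hdiff (p + t • d)).hasFDerivAt.comp_hasDerivAt t line
    simpa [InnerProductSpace.toDual_apply_apply, Function.comp_def] using this
  have hh : ∀ t : ℝ, HasDerivAt h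
      (⟪f' (p + t • d), d⟫ - ⟪f' p, d⟫ - 2 * t * (L / 2 * ‖d‖ ^ 2)) t := by
    intro t
    have h1 := ((hfd t).sub ((hasDerivAt_id t).mul_const ⟪f' p, d⟫)).sub
      ((hasDerivAt_pow 2 t).mul_const (L / 2 * ‖d‖ ^ 2))
    refine h1.congr_deriv ?_
    simp
  have hanti : AntitoneOn h (Set.Icc 0 1) := by
    apply antitoneOn_of_deriv_nonpos (convex_Icc 0 1)
    · exact fun t _ => ((hh t).differentiableAt).continuousAt.continuousWithinAt
    · intro t ht
      rw [interior_Icc] at ht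
      exact ((hh t).differentiableAt).differentiableWithinAt
    · intro t ht
      rw [interior_Icc] at ht
      rw [(hh t).deriv]
      have hb1 : ⟪f' (p + t • d) - f' p, d⟫ ≤ ‖f' (p + t • d) - f' p‖ * ‖d‖ :=
        real_inner_le_norm _ _
      have hb2 : ‖f' (p + t • d) - f' p‖ ≤ L * (t * ‖d‖) := by
        have := hlip (p + t • d) p
        simpa [norm_smul, abs_of_pos ht.1] using this
      have hnd : (0:ℝ) ≤ ‖d‖ := norm_nonneg _
      rw [inner_sub_left] at hb1
      nlinarith [hb1, hb2, hnd, ht.1.le]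
  have := hanti (Set.left_mem_Icc.mpr zero_le_one) (Set.right_mem_Icc.mpr zero_le_one)
    zero_le_one
  have h0 : h 0 = f p := by simp [hh_def]
  have h1 : h 1 = f q - ⟪f' p, d⟫ - L / 2 * ‖d‖ ^ 2 := by
    simp [hh_def, hd]
  rw [h0, h1] at this
  linarith

lemma combo_norm_sq (θ : ℝ) (xx yy : E) :
    ‖xx + θ • (yy - xx)‖ ^ 2
      = (1 - θ) * ‖xx‖ ^ 2 + θ * ‖yy‖ ^ 2 - θ * (1 - θ) * ‖yy - xx‖ ^ 2 := by
  rw [norm_add_sq_real, norm_smul, inner_smul_right, norm_sub_sq_real,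
    inner_sub_right, real_inner_self_eq_norm_sq, mul_pow, Real.norm_eq_abs, sq_abs,
    real_inner_comm yy xx]
  rw [norm_sub_sq_real]
  ring

lemma strong_prox {g : E → ℝ} (hg : ConvexOn ℝ Set.univ g) {L : ℝ} (hL : 0 < L)
    {w p : E} (hp : ∀ z, g p + L / 2 * ‖p - w‖ ^ 2 ≤ g z + L / 2 * ‖z - w‖ ^ 2) (u : E) :
    g p + L / 2 * ‖p - w‖ ^ 2 + L / 2 * ‖u - p‖ ^ 2 ≤ g u + L / 2 * ‖u - w‖ ^ 2 := by
  have key : ∀ θ : ℝ, 0 < θ → θ ≤ 1 →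
      g p + L / 2 * ‖p - w‖ ^ 2 + L / 2 * ‖u - p‖ ^ 2
        ≤ g u + L / 2 * ‖u - w‖ ^ 2 + θ * (L / 2 * ‖u - p‖ ^ 2) := by
    intro θ hθ0 hθ1
    have hc := hp (p + θ • (u - p))
    have hgc : g (p + θ • (u - p)) ≤ (1 - θ) * g p + θ * g u := by
      have h2 := hg.2 (Set.mem_univ p) (Set.mem_univ u) (by linarith : (0:ℝ) ≤ 1 - θ)
        hθ0.le (by ring)
      have hco : (1 - θ) • p + θ • u = p + θ • (u - p) := by module
      rw [hco] at h2
      simpa [smul_eq_mul] using h2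
    have hn : ‖(p + θ • (u - p)) - w‖ ^ 2
        = (1 - θ) * ‖p - w‖ ^ 2 + θ * ‖u - w‖ ^ 2 - θ * (1 - θ) * ‖u - p‖ ^ 2 := by
      have h1 : (p + θ • (u - p)) - w = (p - w) + θ • ((u - w) - (p - w)) := by module
      rw [h1, combo_norm_sq, show (u - w) - (p - w) = u - p by abel]
    rw [hn] at hc
    -- hc with hgc : θ * (LHS - RHS') ≤ 0
    have hkey : 0 ≤ θ * ((g u + L / 2 * ‖u - w‖ ^ 2)
        - (g p + L / 2 * ‖p - w‖ ^ 2 + (1 - θ) * (L / 2) * ‖u - p‖ ^ 2)) := by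
      nlinarith [hc, hgc]
    have := (mul_nonneg_iff_of_pos_left hθ0).mp hkey
    nlinarith [this]
  -- let θ → 0
  have hc0 : (0:ℝ) ≤ L / 2 * ‖u - p‖ ^ 2 := by positivity
  refine le_of_forall_pos_le_add ?_
  intro ε hε
  set c := L / 2 * ‖u - p‖ ^ 2
  set θ := min 1 (ε / (c + 1)) with hθ
  have hθ0 : 0 < θ := lt_min one_pos (by positivity)
  have hθ1 : θ ≤ 1 := min_le_left _ _
  have h := key θ hθ0 hθ1
  have hθc : θ * c ≤ ε := by
    have h1 : θ ≤ ε / (c + 1) := min_le_right _ _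
    have h2 : θ * c ≤ (ε / (c + 1)) * c :=
      mul_le_mul_of_nonneg_right h1 hc0
    have h3 : (ε / (c + 1)) * c ≤ ε := by
      rw [div_mul_eq_mul_div, div_le_iff₀ (by linarith : (0:ℝ) < c + 1)]
      nlinarith
    linarith
  linarith

lemma key_ineq {f : E → ℝ} {f' : E → E} {g : E → ℝ} {L : ℝ} (hL : 0 < L)
    (hdiff : ∀ x, HasGradientAt f (f' x) x)
    (hconv : ConvexOn ℝ Set.univ f)
    (hlip : ∀ x y, ‖f' x - f' y‖ ≤ L * ‖x - y‖)
    (hg : ConvexOn ℝ Set.univ g)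
    (prox : E → E)
    (hprox : ∀ y : E, IsMinOn
      (fun z => g z + (1 / (2 * (1 / L))) * ‖z - y‖ ^ 2) Set.univ (prox y))
    (z u : E) :
    f (z - (1 / L) • pgmL f' prox L z) + g (z - (1 / L) • pgmL f' prox L z)
      ≤ f u + g u + ⟪pgmL f' prox L z, z - u⟫
        - 1 / (2 * L) * ‖pgmL f' prox L z‖ ^ 2 := by
  have hLne : L ≠ 0 := hL.ne'
  set w : E := z - (1 / L) • f' z with hw
  set p : E := prox w with hp_def
  have hTz : z - (1 / L) • pgmL f' prox L z = p := by
    rw [pgmL, smul_smul, show (1 / L) * L = 1 by field_simp, one_smul, ← hw, ← hp_def]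
    abel
  have hG : pgmL f' prox L z = L • (z - p) := rfl
  rw [hTz]
  -- the three ingredient inequalities
  have h1 : f p ≤ f z + ⟪f' z, p - z⟫ + L / 2 * ‖p - z‖ ^ 2 :=
    descent_lemma hdiff hlip z p
  have h2 : f z + ⟪f' z, u - z⟫ ≤ f u := convex_grad_le hconv hdiff z u
  have hcoef : 1 / (2 * (1 / L)) = L / 2 := by field_simp
  have hp' : ∀ t : E, g p + L / 2 * ‖p - w‖ ^ 2 ≤ g t + L / 2 * ‖t - w‖ ^ 2 := by
    intro t
    have := (isMinOn_iff.mp (hprox w)) t (Set.mem_univ t)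
    rwa [hcoef] at this
  have h3 : g p + L / 2 * ‖p - w‖ ^ 2 + L / 2 * ‖u - p‖ ^ 2
      ≤ g u + L / 2 * ‖u - w‖ ^ 2 := strong_prox hg hL hp' u
  -- scalar identities
  have he1 : ‖u - w‖ ^ 2 = ‖u - p‖ ^ 2 + 2 * ⟪u - p, p - w⟫ + ‖p - w‖ ^ 2 := by
    rw [show u - w = (u - p) + (p - w) by abel, norm_add_sq_real]
  have he2 : ⟪u - p, p - w⟫ = ⟪u - p, p - z⟫ + (1 / L) * ⟪u - p, f' z⟫ := by
    rw [show p - w = (p - z) + (1 / L) • f' z by rw [hw]; module,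
      inner_add_right, real_inner_smul_right]
  have he3 : ⟪f' z, p - z⟫ - ⟪f' z, u - z⟫ = -⟪f' z, u - p⟫ := by
    rw [← inner_sub_right, show (p - z) - (u - z) = -(u - p) by abel, inner_neg_right]
  have he4 : ⟪u - p, f' z⟫ = ⟪f' z, u - p⟫ := real_inner_comm _ _
  have he5 : ⟪u - p, p - z⟫ = ⟪z - p, z - u⟫ - ‖z - p‖ ^ 2 := by
    rw [show z - u = (z - p) + (p - u) by abel, inner_add_right,
      real_inner_self_eq_norm_sq,
      show p - u = -(u - p) by abel, show z - p = -(p - z) from (neg_sub p z).symm,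
      inner_neg_neg, real_inner_comm (p - z) (u - p)]
    ring
  have he6 : ‖p - z‖ ^ 2 = ‖z - p‖ ^ 2 := by rw [norm_sub_rev]
  have hGn : ‖pgmL f' prox L z‖ ^ 2 = L ^ 2 * ‖z - p‖ ^ 2 := by
    rw [hG, norm_smul, Real.norm_eq_abs, mul_pow, sq_abs]
  have hGi : ⟪pgmL f' prox L z, z - u⟫ = L * ⟪z - p, z - u⟫ := by
    rw [hG, real_inner_smul_left]
  rw [hGn, hGi]
  have hsc : 1 / (2 * L) * (L ^ 2 * ‖z - p‖ ^ 2) = L / 2 * ‖z - p‖ ^ 2 := by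
    field_simp
  rw [hsc]
  -- combine: f p + g p ≤ f u + g u + L*⟪z-p,z-u⟫ - L/2*‖z-p‖²
  have hfrac : L / 2 * (1 / L * ⟪u - p, f' z⟫) = 1 / 2 * ⟪u - p, f' z⟫ := by
    field_simp
  nlinarith [h1, h2, h3, he1, he2, he3, he4, he5, he6, hfrac]

end Aux

set_option maxHeartbeats 2000000

/-- **Accelerated rates.** With `b_k = (k+1)/4`, `B_k = (k+1)(k+2)/8`, `a_k = (k+1)²/(32L)`, the
condition `a_k ≤ (B_k - b_k²)/(2L)` holds for `k ≥ 1`, and with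
`C̃ = a_0‖G(x⁰)‖² + b_0(φ(y⁰) - φ̄) + (L/2)‖x* - v⁰‖²` one has
`φ(y^k) - φ̄ ≤ 8C̃/((k+1)(k+2))` and `min_{0≤i≤k}‖G(x^i)‖² ≤ 192L·C̃/((k+1)(k+2)(2k+3))`. -/
theorem accelerated_rates
    {E : Type*} [NormedAddCommGroup E] [InnerProductSpace ℝ E] [FiniteDimensional ℝ E]
    (f : E → ℝ) (f' : E → E) (g : E → ℝ) (L : ℝ) (hL : 0 < L)
    (hdiff : ∀ x, HasGradientAt f (f' x) x)
    (hconv : ConvexOn ℝ Set.univ f)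
    (hlip : ∀ x y, ‖f' x - f' y‖ ≤ L * ‖x - y‖)
    (hg : ConvexOn ℝ Set.univ g)
    (prox : E → E)
    (hprox : ∀ y : E, IsMinOn
      (fun z => g z + (1 / (2 * (1 / L))) * ‖z - y‖ ^ 2) Set.univ (prox y))
    (xstar : E) (hmin : IsMinOn (fun z => f z + g z) Set.univ xstar)
    (B b a : ℕ → ℝ)
    (hB : ∀ k : ℕ, B k = ((k : ℝ) + 1) * ((k : ℝ) + 2) / 8)
    (hb : ∀ k : ℕ, b k = ((k : ℝ) + 1) / 4)
    (ha : ∀ k : ℕ, a k = ((k : ℝ) + 1) ^ 2 / (32 * L))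
    (x v y : ℕ → E) (hx0 : x 0 = v 0)
    (hy : ∀ k, y k = x k - (1 / L) • pgmL f' prox L (x k))
    (hv : ∀ k, v (k + 1) = v k - (b k / L) • pgmL f' prox L (x k))
    (hxk : ∀ k, x (k + 1) =
      (B k / B (k + 1)) • y k + (b (k + 1) / B (k + 1)) • v (k + 1)) :
    (∀ k : ℕ, 1 ≤ k → a k ≤ (B k - (b k) ^ 2) / (2 * L)) ∧
    ∀ k : ℕ, 1 ≤ k →
      ((f (y k) + g (y k)) - (f xstar + g xstar)
          ≤ 8 * (a 0 * ‖pgmL f' prox L (x 0)‖ ^ 2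
              + b 0 * ((f (y 0) + g (y 0)) - (f xstar + g xstar))
              + (L / 2) * ‖xstar - v 0‖ ^ 2) / (((k : ℝ) + 1) * ((k : ℝ) + 2))) ∧
      (∃ i ≤ k, ‖pgmL f' prox L (x i)‖ ^ 2
          ≤ 192 * L * (a 0 * ‖pgmL f' prox L (x 0)‖ ^ 2
              + b 0 * ((f (y 0) + g (y 0)) - (f xstar + g xstar))
              + (L / 2) * ‖xstar - v 0‖ ^ 2)
            / (((k : ℝ) + 1) * ((k : ℝ) + 2) * (2 * (k : ℝ) + 3))) := by
  -- abbreviations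
  obtain ⟨G, hGdef⟩ : ∃ G : ℕ → E, ∀ k, G k = pgmL f' prox L (x k) := ⟨_, fun _ => rfl⟩
  obtain ⟨S, hSdef⟩ : ∃ S : ℝ, S = f xstar + g xstar := ⟨_, rfl⟩
  simp only [← hGdef] at hv hy ⊢
  rw [← hSdef]
  -- basic positivity
  have hknn : ∀ k : ℕ, (0:ℝ) ≤ (k:ℝ) := fun k => Nat.cast_nonneg k
  have hBpos : ∀ k : ℕ, 0 < B k := by
    intro k; rw [hB]; have := hknn k; positivity
  have hbpos : ∀ k : ℕ, 0 < b k := by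
    intro k; rw [hb]; have := hknn k; positivity
  have hanng : ∀ k : ℕ, 0 ≤ a k := by
    intro k; rw [ha]; positivity
  have hBsplit : ∀ k : ℕ, B (k + 1) = B k + b (k + 1) := by
    intro k; rw [hB, hB, hb]; push_cast; ring
  -- the condition (first conjunct, for all k)
  have hcond : ∀ k : ℕ, a k ≤ (B k - (b k) ^ 2) / (2 * L) := by
    intro k
    have heq : (B k - (b k) ^ 2) / (2 * L) = ((k:ℝ)+1) * ((k:ℝ)+3) / (32 * L) := by
      rw [hB, hb]; field_simp; ring
    rw [ha, heq, div_le_div_iff₀ (by positivity) (by positivity)]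
    have := hknn k
    nlinarith
  -- key inequality
  have key : ∀ (k : ℕ) (u : E), f (y k) + g (y k)
      ≤ f u + g u + ⟪G k, x k - u⟫ - 1 / (2 * L) * ‖G k‖ ^ 2 := by
    intro k u
    have h := key_ineq hL hdiff hconv hlip hg prox hprox (x k) u
    simp only [← hGdef] at h
    rwa [← hy k] at h
  have hub : ∀ z : E, S ≤ f z + g z := fun z => by
    rw [hSdef]; exact (isMinOn_iff.mp hmin) z (Set.mem_univ z)
  -- expansion of the v-norm term
  have hvexp : ∀ k : ℕ, ‖xstar - v (k+1)‖ ^ 2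
      = ‖xstar - v k‖ ^ 2 + 2 * ((b k / L) * ⟪xstar - v k, G k⟫)
        + (b k / L) ^ 2 * ‖G k‖ ^ 2 := by
    intro k
    have h1 : xstar - v (k+1) = (xstar - v k) + (b k / L) • G k := by
      rw [hv k]; module
    rw [h1, norm_add_sq_real, real_inner_smul_right, norm_smul, Real.norm_eq_abs,
      mul_pow, sq_abs]
  have hcomm : ∀ k : ℕ, ⟪xstar - v k, G k⟫ = -⟪G k, v k - xstar⟫ := by
    intro k
    rw [show xstar - v k = -(v k - xstar) by abel, inner_neg_left, real_inner_comm]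
  -- one-step potential decrease
  have hstep : ∀ k : ℕ,
      B (k+1) * ((f (y (k+1)) + g (y (k+1))) - S) + L / 2 * ‖xstar - v (k+1+1)‖ ^ 2
        + a (k+1) * ‖G (k+1)‖ ^ 2
      ≤ B k * ((f (y k) + g (y k)) - S) + L / 2 * ‖xstar - v (k+1)‖ ^ 2 := by
    intro k
    have hA := key (k+1) xstar
    rw [← hSdef] at hA
    have hB' := key (k+1) (y k)
    -- vector identity
    have hBx : B (k+1) • x (k+1) = B k • y k + b (k+1) • v (k+1) := by
      have e1 : B (k+1) * (B k / B (k+1)) = B k := by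
        rw [mul_comm]; exact div_mul_cancel₀ _ (hBpos (k+1)).ne'
      have e2 : B (k+1) * (b (k+1) / B (k+1)) = b (k+1) := by
        rw [mul_comm]; exact div_mul_cancel₀ _ (hBpos (k+1)).ne'
      rw [hxk k, smul_add, smul_smul, smul_smul, e1, e2]
    have hvec : b (k+1) • (x (k+1) - xstar) + B k • (x (k+1) - y k)
        = b (k+1) • (v (k+1) - xstar) := by
      have hsum : b (k+1) + B k = B (k+1) := by rw [hBsplit k]; ring
      calc b (k+1) • (x (k+1) - xstar) + B k • (x (k+1) - y k)
          = (b (k+1) + B k) • x (k+1) - B k • y k - b (k+1) • xstar := by module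
        _ = B (k+1) • x (k+1) - B k • y k - b (k+1) • xstar := by rw [hsum]
        _ = (B k • y k + b (k+1) • v (k+1)) - B k • y k - b (k+1) • xstar := by rw [hBx]
        _ = b (k+1) • (v (k+1) - xstar) := by module
    have hinner : b (k+1) * ⟪G (k+1), x (k+1) - xstar⟫
        + B k * ⟪G (k+1), x (k+1) - y k⟫
        = b (k+1) * ⟪G (k+1), v (k+1) - xstar⟫ := by
      have := congrArg (fun t => ⟪G (k+1), t⟫) hvec
      simpa [inner_add_right, real_inner_smul_right] using this
    have hG2 : (0:ℝ) ≤ ‖G (k+1)‖ ^ 2 := by positivity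
    have ha' := mul_le_mul_of_nonneg_left hA (hbpos (k+1)).le
    have hb' := mul_le_mul_of_nonneg_left hB' (hBpos k).le
    have hE1 : B (k+1) * (f (y (k+1)) + g (y (k+1)))
        = B k * (f (y (k+1)) + g (y (k+1))) + b (k+1) * (f (y (k+1)) + g (y (k+1))) := by
      rw [hBsplit k]; ring
    have hE2 : B (k+1) * (1 / (2*L) * ‖G (k+1)‖ ^ 2)
        = B k * (1 / (2*L) * ‖G (k+1)‖ ^ 2) + b (k+1) * (1 / (2*L) * ‖G (k+1)‖ ^ 2) := by
      rw [hBsplit k]; ring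
    have hE3 : B (k+1) * S = B k * S + b (k+1) * S := by rw [hBsplit k]; ring
    have h5 : B (k+1) * (f (y (k+1)) + g (y (k+1)))
        ≤ b (k+1) * S + B k * (f (y k) + g (y k))
          + b (k+1) * ⟪G (k+1), v (k+1) - xstar⟫
          - B (k+1) * (1 / (2*L) * ‖G (k+1)‖ ^ 2) := by
      nlinarith [ha', hb', hinner, hE1, hE2]
    have h6 : L / 2 * ‖xstar - v (k+1+1)‖ ^ 2
        = L / 2 * ‖xstar - v (k+1)‖ ^ 2 - b (k+1) * ⟪G (k+1), v (k+1) - xstar⟫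
          + b (k+1) ^ 2 * (1 / (2*L) * ‖G (k+1)‖ ^ 2) := by
      rw [hvexp (k+1), hcomm (k+1)]
      field_simp
      ring
    have hprod := mul_le_mul_of_nonneg_right (hcond (k+1)) hG2
    have hE4 : (B (k+1) - b (k+1) ^ 2) / (2 * L) * ‖G (k+1)‖ ^ 2
        = B (k+1) * (1 / (2*L) * ‖G (k+1)‖ ^ 2)
          - b (k+1) ^ 2 * (1 / (2*L) * ‖G (k+1)‖ ^ 2) := by ring
    linarith [h5, h6, hprod, hE3, hE4.le, hE4.ge]
  -- base case
  have hbase : B 0 * ((f (y 0) + g (y 0)) - S) + L / 2 * ‖xstar - v (0+1)‖ ^ 2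
      + a 0 * ‖G 0‖ ^ 2
      ≤ a 0 * ‖G 0‖ ^ 2 + b 0 * ((f (y 0) + g (y 0)) - S)
        + L / 2 * ‖xstar - v 0‖ ^ 2 := by
    have hA := key 0 xstar
    rw [hx0] at hA
    have ha' := mul_le_mul_of_nonneg_left hA (hbpos 0).le
    rw [← hSdef] at ha'
    have h6 : L / 2 * ‖xstar - v (0+1)‖ ^ 2
        = L / 2 * ‖xstar - v 0‖ ^ 2 - b 0 * ⟪G 0, v 0 - xstar⟫
          + b 0 ^ 2 * (1 / (2*L) * ‖G 0‖ ^ 2) := by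
      rw [hvexp 0, hcomm 0]
      field_simp
      ring
    have hg0 : 0 ≤ (f (y 0) + g (y 0)) - S := by linarith [hub (y 0)]
    have hB0 : B 0 = b 0 := by rw [hB, hb]; norm_num
    have hbb : b 0 = 1/4 := by rw [hb]; norm_num
    have hG2 : (0:ℝ) ≤ ‖G 0‖ ^ 2 := by positivity
    have hc0 : (0:ℝ) ≤ (b 0 - b 0 ^ 2) * (1 / (2*L) * ‖G 0‖ ^ 2) := by
      rw [hbb]; positivity
    rw [hB0]
    linarith [ha', h6, hg0, hc0, mul_nonneg (hbpos 0).le hg0]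
  -- the aggregated potential bound
  have hclaim : ∀ k : ℕ,
      B k * ((f (y k) + g (y k)) - S) + L / 2 * ‖xstar - v (k+1)‖ ^ 2
        + (∑ i ∈ Finset.range (k+1), a i * ‖G i‖ ^ 2)
      ≤ a 0 * ‖G 0‖ ^ 2 + b 0 * ((f (y 0) + g (y 0)) - S)
        + L / 2 * ‖xstar - v 0‖ ^ 2 := by
    intro k
    induction k with
    | zero =>
        have e : ∑ i ∈ Finset.range (0+1), a i * ‖G i‖ ^ 2 = a 0 * ‖G 0‖ ^ 2 := by simp
        rw [e]
        exact hbase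
    | succ m ih =>
      have := hstep m
      rw [Finset.sum_range_succ]
      linarith [this, ih]
  -- nonnegativity of pieces
  have hgapnn : ∀ k : ℕ, 0 ≤ (f (y k) + g (y k)) - S := fun k => by linarith [hub (y k)]
  have hsumnn : ∀ k : ℕ, 0 ≤ ∑ i ∈ Finset.range (k+1), a i * ‖G i‖ ^ 2 := by
    intro k
    apply Finset.sum_nonneg
    intro i _
    exact mul_nonneg (hanng i) (by positivity)
  refine ⟨fun k _ => hcond k, fun k _ => ⟨?_, ?_⟩⟩
  · -- function value rate
    have h1 := hclaim k
    have h2 : B k * ((f (y k) + g (y k)) - S)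
        ≤ a 0 * ‖G 0‖ ^ 2 + b 0 * ((f (y 0) + g (y 0)) - S)
          + L / 2 * ‖xstar - v 0‖ ^ 2 := by
      have : (0:ℝ) ≤ L / 2 * ‖xstar - v (k+1)‖ ^ 2 := by positivity
      linarith [hsumnn k]
    rw [le_div_iff₀ (by have := hknn k; positivity : (0:ℝ) < ((k:ℝ)+1) * ((k:ℝ)+2))]
    have hEq : ((f (y k) + g (y k)) - S) * (((k:ℝ)+1) * ((k:ℝ)+2))
        = 8 * (B k * ((f (y k) + g (y k)) - S)) := by
      rw [hB]; ring
    rw [hEq]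
    linarith [h2]
  · -- gradient norm rate
    have h1 := hclaim k
    have h2 : (∑ i ∈ Finset.range (k+1), a i * ‖G i‖ ^ 2)
        ≤ a 0 * ‖G 0‖ ^ 2 + b 0 * ((f (y 0) + g (y 0)) - S)
          + L / 2 * ‖xstar - v 0‖ ^ 2 := by
      have hn1 : (0:ℝ) ≤ L / 2 * ‖xstar - v (k+1)‖ ^ 2 := by positivity
      have hn2 : (0:ℝ) ≤ B k * ((f (y k) + g (y k)) - S) :=
        mul_nonneg (hBpos k).le (hgapnn k)
      linarith
    obtain ⟨i, hi, hmin'⟩ := Finset.exists_min_image (Finset.range (k+1))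
      (fun i => ‖G i‖ ^ 2) ⟨0, by simp⟩
    refine ⟨i, Finset.mem_range_succ_iff.mp hi, ?_⟩
    have hlow : (∑ j ∈ Finset.range (k+1), a j) * ‖G i‖ ^ 2
        ≤ ∑ j ∈ Finset.range (k+1), a j * ‖G j‖ ^ 2 := by
      rw [Finset.sum_mul]
      exact Finset.sum_le_sum fun j hj =>
        mul_le_mul_of_nonneg_left (hmin' j hj) (hanng j)
    have hsq : ∀ n : ℕ, (∑ i ∈ Finset.range (n+1), (((i:ℝ)+1)^2))
        = ((n:ℝ)+1) * ((n:ℝ)+2) * (2*(n:ℝ)+3) / 6 := by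
      intro n
      induction n with
      | zero => norm_num
      | succ m ih =>
        rw [Finset.sum_range_succ, ih]
        push_cast; ring
    have hsuma : (∑ j ∈ Finset.range (k+1), a j)
        = ((k:ℝ)+1) * ((k:ℝ)+2) * (2*(k:ℝ)+3) / (192 * L) := by
      have e1 : (∑ j ∈ Finset.range (k+1), a j)
          = (∑ j ∈ Finset.range (k+1), (((j:ℝ)+1)^2)) / (32 * L) := by
        rw [Finset.sum_div]
        exact Finset.sum_congr rfl fun j _ => by rw [ha]
      rw [e1, hsq k]
      field_simp
      ring
    have hP : (0:ℝ) < ((k:ℝ)+1) * ((k:ℝ)+2) * (2*(k:ℝ)+3) := by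
      have := hknn k; positivity
    rw [le_div_iff₀ hP]
    have h3 : ((k:ℝ)+1) * ((k:ℝ)+2) * (2*(k:ℝ)+3) / (192 * L) * ‖G i‖ ^ 2
        ≤ a 0 * ‖G 0‖ ^ 2 + b 0 * ((f (y 0) + g (y 0)) - S)
          + L / 2 * ‖xstar - v 0‖ ^ 2 := by
      rw [← hsuma]; linarith [hlow, h2]
    have h4 := mul_le_mul_of_nonneg_left h3 (by positivity : (0:ℝ) ≤ 192 * L)
    have hsimp : 192 * L * (((k:ℝ)+1) * ((k:ℝ)+2) * (2*(k:ℝ)+3) / (192 * L) * ‖G i‖ ^ 2)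
        = ‖G i‖ ^ 2 * (((k:ℝ)+1) * ((k:ℝ)+2) * (2*(k:ℝ)+3)) := by
      field_simp
    rw [hsimp] at h4
    linarith [h4]
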